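/- Let λ = (λ_1,…,λ_k) be a nonnegative rate vector, 0 ≤ ρ ≤ 1, and define the thinned rates μ_{j₁} = Σ_{j=j₁}^{k} (j choose j₁) ρ^{j₁}(1−ρ)^{j−j₁} λ_j for 1 ≤ j₁ ≤ k. Then for every n ∈ ℕ₀ and t ≥ 0, d/dt p(μ; n, t) = −( Σ_{j=1}^{k} λ_j (1 − (1−ρ)^j) ) p(μ; n, t) + Σ_{j=1}^{k} Σ_{j₁=1}^{j} λ_j (j choose j₁) ρ^{j₁}(1−ρ)^{j−j₁} p(μ; n−j₁, t), where p(μ; m, t) is taken to be 0 for m < 0, and the initial conditions p(μ; 0, 0) = 1 and p(μ; n, 0) = 0 for n ≥ 1 hold. In words: under Type II splitting (each of the j coin flips of a j-size jump routes one unit to the first component with probability ρ), the first split component is a GCP with jump rates μ_{j₁} and its state probabilities solve the stated system of differential equations. -/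

import Mathlib

open Finset

/-- The set `Ω(k, n)` of tuples `x : Fin k → ℕ` with `∑_{j=1}^k j * x_j = n`
(`j : Fin k` represents the jump size `j + 1`). -/
def gcpOmega (k n : ℕ) : Finset (Fin k → ℕ) :=
  (Fintype.piFinset fun _ : Fin k => Finset.range (n + 1)).filter
    fun x => ∑ j : Fin k, (j.1 + 1) * x j = n

/-- The probability mass function of the generalized counting process with jump
rates `lam j` for jumps of size `j + 1`, evaluated at state `n` and time `t`. -/
noncomputable def gcpPMF (k : ℕ) (lam : Fin k → ℝ) (n : ℕ) (t : ℝ) : ℝ :=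
  ∑ x ∈ gcpOmega k n,
    ∏ j : Fin k, (lam j * t) ^ (x j) / (Nat.factorial (x j)) * Real.exp (-(lam j * t))


lemma mem_gcpOmega {k n : ℕ} {x : Fin k → ℕ} :
    x ∈ gcpOmega k n ↔ ∑ j : Fin k, (j.1 + 1) * x j = n := by
  simp only [gcpOmega, Finset.mem_filter, Fintype.mem_piFinset, Finset.mem_range]
  constructor
  · exact fun h => h.2
  · intro h
    refine ⟨fun j => ?_, h⟩
    have h1 : x j ≤ (j.1 + 1) * x j := Nat.le_mul_of_pos_left _ (Nat.succ_pos _)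
    have h2 : (j.1 + 1) * x j ≤ n := h ▸
      Finset.single_le_sum (f := fun j : Fin k => (j.1 + 1) * x j)
        (fun i _ => Nat.zero_le _) (Finset.mem_univ j)
    omega

lemma le_of_mem_gcpOmega {k n : ℕ} {x : Fin k → ℕ} (hx : x ∈ gcpOmega k n) (j : Fin k) :
    (j.1 + 1) * x j ≤ n := by
  rw [mem_gcpOmega] at hx
  exact hx ▸ Finset.single_le_sum (f := fun j : Fin k => (j.1 + 1) * x j)
    (fun i _ => Nat.zero_le _) (Finset.mem_univ j)

lemma gcpPMF_eq (k : ℕ) (ν : Fin k → ℝ) (n : ℕ) (t : ℝ) :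
    gcpPMF k ν n t = ∑ x ∈ gcpOmega k n,
      (∏ j : Fin k, ν j ^ (x j) / (Nat.factorial (x j))) * t ^ (∑ j : Fin k, x j)
        * Real.exp (-(∑ j : Fin k, ν j) * t) := by
  unfold gcpPMF
  refine Finset.sum_congr rfl fun x _ => ?_
  rw [Finset.prod_mul_distrib]
  congr 1
  · rw [← Finset.prod_pow_eq_pow_sum, ← Finset.prod_mul_distrib]
    refine Finset.prod_congr rfl fun j _ => ?_
    rw [mul_pow]; ring
  · rw [← Real.exp_sum]
    congr 1
    simp [neg_mul, Finset.sum_neg_distrib, Finset.sum_mul]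

lemma sum_coeff_update {k : ℕ} (x : Fin k → ℕ) (j₀ : Fin k) (m : ℕ) (g : Fin k → ℕ) :
    ∑ j : Fin k, g j * Function.update x j₀ m j + g j₀ * x j₀
      = ∑ j : Fin k, g j * x j + g j₀ * m := by
  rw [← Finset.sum_erase_add _ _ (Finset.mem_univ j₀),
    ← Finset.sum_erase_add _ (fun j => g j * x j) (Finset.mem_univ j₀)]
  have h : ∀ j ∈ Finset.univ.erase j₀, g j * Function.update x j₀ m j = g j * x j :=
    fun j hj => by rw [Function.update_of_ne (Finset.mem_erase.mp hj).1]
  rw [Finset.sum_congr rfl h, Function.update_self]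
  ring

lemma key_j (k n : ℕ) (ν : Fin k → ℝ) (t : ℝ) (j₀ : Fin k) :
    ∑ x ∈ gcpOmega k n,
      (∏ j : Fin k, ν j ^ (x j) / (Nat.factorial (x j))) * ((x j₀ : ℝ) * t ^ ((∑ j : Fin k, x j) - 1)) =
    ν j₀ * (if j₀.1 + 1 ≤ n then
      ∑ y ∈ gcpOmega k (n - (j₀.1 + 1)),
        (∏ j : Fin k, ν j ^ (y j) / (Nat.factorial (y j))) * t ^ (∑ j : Fin k, y j)
      else 0) := by
  by_cases hn : j₀.1 + 1 ≤ n
  · rw [if_pos hn, Finset.mul_sum]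
    rw [← Finset.sum_filter_of_ne (p := fun x : Fin k → ℕ => x j₀ ≠ 0)
      (fun x _ h => by intro h0; apply h; simp [h0])]
    refine Finset.sum_nbij' (fun x => Function.update x j₀ (x j₀ - 1))
      (fun y => Function.update y j₀ (y j₀ + 1)) ?_ ?_ ?_ ?_ ?_
    · intro x hx
      rw [Finset.mem_filter, mem_gcpOmega] at hx
      obtain ⟨hx, hx0⟩ := hx
      rw [mem_gcpOmega]
      have h := sum_coeff_update x j₀ (x j₀ - 1) (fun j => j.1 + 1)
      obtain ⟨p, hp⟩ : ∃ p, x j₀ = p + 1 := ⟨x j₀ - 1, by omega⟩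
      simp only [hp, Nat.add_sub_cancel] at h ⊢
      rw [hx] at h
      have h2 : (j₀.1 + 1) * (p + 1) = (j₀.1 + 1) * p + (j₀.1 + 1) := by ring
      omega
    · intro y hy
      rw [mem_gcpOmega] at hy
      rw [Finset.mem_filter, mem_gcpOmega]
      have h := sum_coeff_update y j₀ (y j₀ + 1) (fun j => j.1 + 1)
      rw [hy] at h
      have h2 : (j₀.1 + 1) * (y j₀ + 1) = (j₀.1 + 1) * y j₀ + (j₀.1 + 1) := by ring
      constructor
      · omega
      · simp
    · intro x hx
      rw [Finset.mem_filter] at hx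
      rw [Function.update_self, Function.update_idem,
        Nat.sub_add_cancel (Nat.one_le_iff_ne_zero.mpr hx.2)]
      exact Function.update_eq_self _ _
    · intro y hy
      rw [Function.update_self, Function.update_idem, Nat.add_sub_cancel]
      exact Function.update_eq_self _ _
    · intro x hx
      rw [Finset.mem_filter] at hx
      obtain ⟨hx, hx0⟩ := hx
      obtain ⟨p, hp⟩ : ∃ p, x j₀ = p + 1 := ⟨x j₀ - 1, by omega⟩
      set x' := Function.update x j₀ (x j₀ - 1) with hx'
      -- sums of coordinates
      have hsum := sum_coeff_update x j₀ (x j₀ - 1) (fun _ => 1)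
      simp only [one_mul] at hsum
      rw [← hx'] at hsum
      have hS : ∑ j : Fin k, x j = (∑ j : Fin k, x' j) + 1 := by omega
      -- products
      have hprod : ∏ j : Fin k, ν j ^ (x j) / (Nat.factorial (x j))
          = (∏ j ∈ Finset.univ.erase j₀, ν j ^ (x j) / (Nat.factorial (x j)))
            * (ν j₀ ^ (p + 1) / (Nat.factorial (p + 1))) := by
        rw [← hp, Finset.prod_erase_mul _ _ (Finset.mem_univ j₀)]
      have hprod' : ∏ j : Fin k, ν j ^ (x' j) / (Nat.factorial (x' j))
          = (∏ j ∈ Finset.univ.erase j₀, ν j ^ (x j) / (Nat.factorial (x j)))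
            * (ν j₀ ^ p / (Nat.factorial p)) := by
        rw [← Finset.prod_erase_mul _ _ (Finset.mem_univ j₀)]
        congr 1
        · refine Finset.prod_congr rfl fun j hj => ?_
          rw [hx', Function.update_of_ne (Finset.mem_erase.mp hj).1]
        · rw [hx', Function.update_self, hp, Nat.add_sub_cancel]
      rw [hprod, hprod', hS, hp]
      have hfac : (Nat.factorial (p + 1) : ℝ) = (p + 1) * Nat.factorial p := by
        rw [Nat.factorial_succ]; push_cast; ring
      have hfacne : (Nat.factorial p : ℝ) ≠ 0 := Nat.cast_ne_zero.mpr (Nat.factorial_ne_zero p)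
      have hp1ne : ((p : ℝ) + 1) ≠ 0 := by positivity
      rw [Nat.add_sub_cancel]
      push_cast [hfac]
      field_simp
      ring
  · rw [if_neg hn, mul_zero]
    refine Finset.sum_eq_zero fun x hx => ?_
    have h := le_of_mem_gcpOmega hx j₀
    have : x j₀ = 0 := by nlinarith [Nat.le_mul_of_pos_left (x j₀) (Nat.succ_pos j₀.1)]
    simp [this]

lemma gcpPMF_eq' (k : ℕ) (ν : Fin k → ℝ) (n : ℕ) (t : ℝ) :
    gcpPMF k ν n t = (∑ x ∈ gcpOmega k n,
      (∏ j : Fin k, ν j ^ (x j) / (Nat.factorial (x j))) * t ^ (∑ j : Fin k, x j))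
        * Real.exp (-(∑ j : Fin k, ν j) * t) := by
  rw [gcpPMF_eq, Finset.sum_mul]

lemma gcp_hasDerivAt (k : ℕ) (ν : Fin k → ℝ) (n : ℕ) (t : ℝ) :
    HasDerivAt (fun s => gcpPMF k ν n s)
      (-(∑ j : Fin k, ν j) * gcpPMF k ν n t
        + ∑ j : Fin k, ν j * (if j.1 + 1 ≤ n then gcpPMF k ν (n - (j.1 + 1)) t else 0)) t := by
  have hfun : (fun s => gcpPMF k ν n s) = fun s => ∑ x ∈ gcpOmega k n,
      (∏ j : Fin k, ν j ^ (x j) / (Nat.factorial (x j))) * s ^ (∑ j : Fin k, x j)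
        * Real.exp (-(∑ j : Fin k, ν j) * s) := funext fun s => gcpPMF_eq k ν n s
  rw [hfun]
  have hexp : HasDerivAt (fun s : ℝ => Real.exp (-(∑ j : Fin k, ν j) * s))
      (Real.exp (-(∑ j : Fin k, ν j) * t) * (-(∑ j : Fin k, ν j))) t := by
    simpa using ((hasDerivAt_id t).const_mul (-(∑ j : Fin k, ν j))).exp
  have hder : HasDerivAt (fun s => ∑ x ∈ gcpOmega k n,
      (∏ j : Fin k, ν j ^ (x j) / (Nat.factorial (x j))) * s ^ (∑ j : Fin k, x j)
        * Real.exp (-(∑ j : Fin k, ν j) * s))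
      (∑ x ∈ gcpOmega k n,
        ((∏ j : Fin k, ν j ^ (x j) / (Nat.factorial (x j)))
            * (((∑ j : Fin k, x j : ℕ) : ℝ) * t ^ ((∑ j : Fin k, x j) - 1))
            * Real.exp (-(∑ j : Fin k, ν j) * t)
          + (∏ j : Fin k, ν j ^ (x j) / (Nat.factorial (x j))) * t ^ (∑ j : Fin k, x j)
            * (Real.exp (-(∑ j : Fin k, ν j) * t) * (-(∑ j : Fin k, ν j))))) t := by
    apply HasDerivAt.fun_sum
    intro x _
    exact ((hasDerivAt_pow (∑ j : Fin k, x j) t).const_mul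
      (∏ j : Fin k, ν j ^ (x j) / (Nat.factorial (x j)))).mul hexp
  convert hder using 1
  rw [Finset.sum_add_distrib]
  have hB : ∑ x ∈ gcpOmega k n,
      (∏ j : Fin k, ν j ^ (x j) / (Nat.factorial (x j))) * t ^ (∑ j : Fin k, x j)
        * (Real.exp (-(∑ j : Fin k, ν j) * t) * (-(∑ j : Fin k, ν j)))
      = -(∑ j : Fin k, ν j) * gcpPMF k ν n t := by
    rw [gcpPMF_eq, Finset.mul_sum]
    exact Finset.sum_congr rfl fun x _ => by ring
  have hA : ∑ x ∈ gcpOmega k n,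
      (∏ j : Fin k, ν j ^ (x j) / (Nat.factorial (x j)))
        * (((∑ j : Fin k, x j : ℕ) : ℝ) * t ^ ((∑ j : Fin k, x j) - 1))
        * Real.exp (-(∑ j : Fin k, ν j) * t)
      = ∑ j : Fin k, ν j * (if j.1 + 1 ≤ n then gcpPMF k ν (n - (j.1 + 1)) t else 0) := by
    have step1 : ∀ x ∈ gcpOmega k n,
        (∏ j : Fin k, ν j ^ (x j) / (Nat.factorial (x j)))
          * (((∑ j : Fin k, x j : ℕ) : ℝ) * t ^ ((∑ j : Fin k, x j) - 1))
          * Real.exp (-(∑ j : Fin k, ν j) * t)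
        = ∑ j₀ : Fin k, (∏ j : Fin k, ν j ^ (x j) / (Nat.factorial (x j)))
            * ((x j₀ : ℝ) * t ^ ((∑ j : Fin k, x j) - 1))
            * Real.exp (-(∑ j : Fin k, ν j) * t) := by
      intro x _
      rw [Nat.cast_sum, Finset.sum_mul, Finset.mul_sum, Finset.sum_mul]
    rw [Finset.sum_congr rfl step1, Finset.sum_comm]
    refine Finset.sum_congr rfl fun j₀ _ => ?_
    have := key_j k n ν t j₀
    calc ∑ x ∈ gcpOmega k n,
        (∏ j : Fin k, ν j ^ (x j) / (Nat.factorial (x j)))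
          * ((x j₀ : ℝ) * t ^ ((∑ j : Fin k, x j) - 1))
          * Real.exp (-(∑ j : Fin k, ν j) * t)
        = (∑ x ∈ gcpOmega k n, (∏ j : Fin k, ν j ^ (x j) / (Nat.factorial (x j)))
            * ((x j₀ : ℝ) * t ^ ((∑ j : Fin k, x j) - 1)))
            * Real.exp (-(∑ j : Fin k, ν j) * t) := by rw [Finset.sum_mul]
      _ = ν j₀ * (if j₀.1 + 1 ≤ n then gcpPMF k ν (n - (j₀.1 + 1)) t else 0) := by
          rw [this]
          by_cases h : j₀.1 + 1 ≤ n
          · rw [if_pos h, if_pos h, gcpPMF_eq']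
            ring
          · simp [h]
  rw [hA, hB, add_comm]

lemma fin_ite_sum {k : ℕ} (j : Fin k) (f : ℕ → ℝ) :
    ∑ j₁ : Fin k, (if j₁ ≤ j then f j₁.1 else 0) = ∑ m ∈ Finset.range (j.1 + 1), f m := by
  have h1 : ∀ j₁ : Fin k, (if j₁ ≤ j then f j₁.1 else 0)
      = (fun m => if m ≤ j.1 then f m else 0) j₁.1 := fun j₁ => by
    simp only [Fin.le_def]
  rw [Finset.sum_congr rfl fun j₁ _ => h1 j₁,
    Fin.sum_univ_eq_sum_range (fun m => if m ≤ j.1 then f m else 0) k, ← Finset.sum_filter]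
  congr 1
  ext m
  simp only [Finset.mem_filter, Finset.mem_range]
  have := j.isLt
  omega

lemma binom_inner (ρ : ℝ) (J : ℕ) :
    ∑ m ∈ Finset.range (J + 1), (Nat.choose (J + 1) (m + 1) : ℝ) * ρ ^ (m + 1) * (1 - ρ) ^ (J - m)
      = 1 - (1 - ρ) ^ (J + 1) := by
  have h := add_pow ρ (1 - ρ) (J + 1)
  have h1 : ρ + (1 - ρ) = 1 := by ring
  rw [h1, one_pow, Finset.sum_range_succ'] at h
  simp only [pow_zero, Nat.choose_zero_right, Nat.cast_one, one_mul, mul_one, Nat.sub_zero] at h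
  have h2 : ∀ m ∈ Finset.range (J + 1),
      (Nat.choose (J + 1) (m + 1) : ℝ) * ρ ^ (m + 1) * (1 - ρ) ^ (J - m)
        = ρ ^ (m + 1) * (1 - ρ) ^ (J + 1 - (m + 1)) * (Nat.choose (J + 1) (m + 1) : ℝ) := by
    intro m _
    have h3 : J + 1 - (m + 1) = J - m := by omega
    rw [h3]; ring
  rw [Finset.sum_congr rfl h2]
  linarith [h]

lemma Icc_sum (N : ℕ) (f : ℕ → ℝ) :
    ∑ j₁ ∈ Finset.Icc 1 (N + 1), f j₁ = ∑ m ∈ Finset.range (N + 1), f (m + 1) := by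
  have : Finset.Icc 1 (N + 1) = Finset.Ico 1 (N + 2) := by
    exact (Finset.Ico_add_one_right_eq_Icc 1 (N + 1)).symm
  rw [this, Finset.sum_Ico_eq_sum_range]
  have h2 : N + 2 - 1 = N + 1 := by omega
  rw [h2]
  exact Finset.sum_congr rfl fun m _ => by rw [Nat.add_comm 1 m]

/-- Under Type II splitting of a GCP with rates `lam` (each unit of a `j`-size jump
is routed to the first component with probability `ρ`), the first split component is
a GCP with thinned rates `μ_{j₁} = Σ_{j ≥ j₁} C(j, j₁) ρ^{j₁} (1−ρ)^{j−j₁} λ_j`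
( jump sizes are represented by `j.1 + 1` for `j : Fin k`), and its state
probabilities solve the stated system of differential equations with the stated
initial conditions. -/
theorem type_II_splitting_first_component_ode (k : ℕ) (hk : 1 ≤ k)
    (lam : Fin k → ℝ) (hlam : ∀ j, 0 ≤ lam j) (ρ : ℝ) (hρ0 : 0 ≤ ρ) (hρ1 : ρ ≤ 1)
    (mu : Fin k → ℝ)
    (hmu : ∀ j₁ : Fin k, mu j₁ = ∑ j : Fin k,
      if j₁ ≤ j then
        (Nat.choose (j.1 + 1) (j₁.1 + 1)) * ρ ^ (j₁.1 + 1) * (1 - ρ) ^ (j.1 - j₁.1) * lam j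
      else 0) :
    (∀ (n : ℕ) (t : ℝ), 0 ≤ t →
      HasDerivAt (fun s => gcpPMF k mu n s)
        (-(∑ j : Fin k, lam j * (1 - (1 - ρ) ^ (j.1 + 1))) * gcpPMF k mu n t
          + ∑ j : Fin k, ∑ j₁ ∈ Finset.Icc 1 (j.1 + 1),
              lam j * (Nat.choose (j.1 + 1) j₁) * ρ ^ j₁ * (1 - ρ) ^ (j.1 + 1 - j₁) *
                (if j₁ ≤ n then gcpPMF k mu (n - j₁) t else 0)) t) ∧
    gcpPMF k mu 0 0 = 1 ∧ (∀ n : ℕ, 1 ≤ n → gcpPMF k mu n 0 = 0) := by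
  refine ⟨?_, ?_, ?_⟩
  · intro n t _
    have hder := gcp_hasDerivAt k mu n t
    have hA : ∑ j : Fin k, mu j = ∑ j : Fin k, lam j * (1 - (1 - ρ) ^ (j.1 + 1)) := by
      rw [Finset.sum_congr rfl fun j₁ _ => hmu j₁, Finset.sum_comm]
      refine Finset.sum_congr rfl fun j _ => ?_
      calc ∑ j₁ : Fin k, (if j₁ ≤ j then
              (Nat.choose (j.1 + 1) (j₁.1 + 1) : ℝ) * ρ ^ (j₁.1 + 1) * (1 - ρ) ^ (j.1 - j₁.1) * lam j
            else 0)
          = ∑ m ∈ Finset.range (j.1 + 1),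
              (Nat.choose (j.1 + 1) (m + 1) : ℝ) * ρ ^ (m + 1) * (1 - ρ) ^ (j.1 - m) * lam j :=
            fin_ite_sum j (fun m =>
              (Nat.choose (j.1 + 1) (m + 1) : ℝ) * ρ ^ (m + 1) * (1 - ρ) ^ (j.1 - m) * lam j)
        _ = (∑ m ∈ Finset.range (j.1 + 1),
              (Nat.choose (j.1 + 1) (m + 1) : ℝ) * ρ ^ (m + 1) * (1 - ρ) ^ (j.1 - m)) * lam j := by
            rw [Finset.sum_mul]
        _ = lam j * (1 - (1 - ρ) ^ (j.1 + 1)) := by rw [binom_inner ρ j.1]; ring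
    have hB : ∑ j₀ : Fin k, mu j₀ * (if j₀.1 + 1 ≤ n then gcpPMF k mu (n - (j₀.1 + 1)) t else 0)
        = ∑ j : Fin k, ∑ j₁ ∈ Finset.Icc 1 (j.1 + 1),
            lam j * (Nat.choose (j.1 + 1) j₁) * ρ ^ j₁ * (1 - ρ) ^ (j.1 + 1 - j₁) *
              (if j₁ ≤ n then gcpPMF k mu (n - j₁) t else 0) := by
      calc ∑ j₀ : Fin k, mu j₀ * (if j₀.1 + 1 ≤ n then gcpPMF k mu (n - (j₀.1 + 1)) t else 0)
          = ∑ j₀ : Fin k, ∑ j : Fin k, (if j₀ ≤ j then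
              (Nat.choose (j.1 + 1) (j₀.1 + 1) : ℝ) * ρ ^ (j₀.1 + 1) * (1 - ρ) ^ (j.1 - j₀.1) * lam j
                * (if j₀.1 + 1 ≤ n then gcpPMF k mu (n - (j₀.1 + 1)) t else 0)
              else 0) := by
            refine Finset.sum_congr rfl fun j₀ _ => ?_
            rw [hmu j₀, Finset.sum_mul]
            exact Finset.sum_congr rfl fun j _ => by rw [ite_mul, zero_mul]
        _ = ∑ j : Fin k, ∑ j₀ : Fin k, (if j₀ ≤ j then
              (Nat.choose (j.1 + 1) (j₀.1 + 1) : ℝ) * ρ ^ (j₀.1 + 1) * (1 - ρ) ^ (j.1 - j₀.1) * lam j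
                * (if j₀.1 + 1 ≤ n then gcpPMF k mu (n - (j₀.1 + 1)) t else 0)
              else 0) := Finset.sum_comm
        _ = ∑ j : Fin k, ∑ m ∈ Finset.range (j.1 + 1),
              (Nat.choose (j.1 + 1) (m + 1) : ℝ) * ρ ^ (m + 1) * (1 - ρ) ^ (j.1 - m) * lam j
                * (if m + 1 ≤ n then gcpPMF k mu (n - (m + 1)) t else 0) :=
            Finset.sum_congr rfl fun j _ => fin_ite_sum j (fun m =>
              (Nat.choose (j.1 + 1) (m + 1) : ℝ) * ρ ^ (m + 1) * (1 - ρ) ^ (j.1 - m) * lam j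
                * (if m + 1 ≤ n then gcpPMF k mu (n - (m + 1)) t else 0))
        _ = ∑ j : Fin k, ∑ j₁ ∈ Finset.Icc 1 (j.1 + 1),
              lam j * (Nat.choose (j.1 + 1) j₁) * ρ ^ j₁ * (1 - ρ) ^ (j.1 + 1 - j₁) *
                (if j₁ ≤ n then gcpPMF k mu (n - j₁) t else 0) := by
            refine Finset.sum_congr rfl fun j _ => ?_
            rw [Icc_sum j.1 (fun j₁ => lam j * (Nat.choose (j.1 + 1) j₁) * ρ ^ j₁
              * (1 - ρ) ^ (j.1 + 1 - j₁) * (if j₁ ≤ n then gcpPMF k mu (n - j₁) t else 0))]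
            refine Finset.sum_congr rfl fun m _ => ?_
            rw [Nat.succ_sub_succ]
            ring
    rw [hA, hB] at hder
    exact hder
  · have hΩ0 : gcpOmega k 0 = {fun _ => 0} := by
      ext x
      rw [mem_gcpOmega, Finset.mem_singleton]
      constructor
      · intro h
        funext j
        have h2 := Finset.sum_eq_zero_iff.mp h j (Finset.mem_univ j)
        simpa using h2
      · intro h; subst h; simp
    unfold gcpPMF
    rw [hΩ0]
    simp
  · intro n hn
    unfold gcpPMF
    refine Finset.sum_eq_zero fun x hx => ?_
    rw [mem_gcpOmega] at hx
    have hex : ∃ j, x j ≠ 0 := by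
      by_contra h
      push_neg at h
      rw [Finset.sum_eq_zero (fun j _ => by rw [h j, mul_zero])] at hx
      omega
    obtain ⟨j, hj⟩ := hex
    refine Finset.prod_eq_zero (Finset.mem_univ j) ?_
    rw [mul_zero, zero_pow hj, zero_div, zero_mul]
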